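/- If f : {0,1}^n → {0,1}^n is a Boolean network whose interaction graph G(f) is acyclic, then f has a unique fixed point. -/

import Mathlib

/-- One asynchronous update step of the Boolean network `f`. -/
def Step {I : Type*} [DecidableEq I] (f : (I → Bool) → I → Bool) (x y : I → Bool) : Prop :=
  ∃ i, f x i ≠ x i ∧ y = Function.update x i (f x i)

/-- `Γ(f)` has a path from `x` to `y` of length `l`. -/
def PathLen {I : Type*} [DecidableEq I] (f : (I → Bool) → I → Bool)
    (x y : I → Bool) (l : ℕ) : Prop :=
  ∃ p : ℕ → I → Bool, p 0 = x ∧ p l = y ∧ ∀ k < l, Step f (p k) (p (k + 1))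

/-- Positive arc from `j` to `i` in the interaction graph `G(f)`. -/
def PosArc {n : ℕ} (f : (Fin n → Bool) → Fin n → Bool) (j i : Fin n) : Prop :=
  ∃ x, f (Function.update x j true) i = true ∧ f (Function.update x j false) i = false

/-- Negative arc from `j` to `i` in the interaction graph `G(f)`. -/
def NegArc {n : ℕ} (f : (Fin n → Bool) → Fin n → Bool) (j i : Fin n) : Prop :=
  ∃ x, f (Function.update x j true) i = false ∧ f (Function.update x j false) i = true

/-- Arc in the underlying unsigned digraph of `G(f)`. -/
def Arc {n : ℕ} (f : (Fin n → Bool) → Fin n → Bool) (j i : Fin n) : Prop :=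
  PosArc f j i ∨ NegArc f j i

/-- The interaction graph `G(f)` is acyclic (no directed cycle, including loops). -/
def AcyclicIG {n : ℕ} (f : (Fin n → Bool) → Fin n → Bool) : Prop :=
  ∀ i, ¬ Relation.TransGen (Arc f) i i

/-- Hamming distance. -/
def ham {n : ℕ} (x y : Fin n → Bool) : ℕ :=
  (Finset.univ.filter fun i => x i ≠ y i).card

/-- Componentwise negation. -/
def negc {n : ℕ} (x : Fin n → Bool) : Fin n → Bool := fun i => !(x i)

/-- Number of ones (weight). -/
def wt {n : ℕ} (x : Fin n → Bool) : ℕ :=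
  (Finset.univ.filter fun i => x i = true).card

/-- `x` with coordinate `i` flipped. -/
def flipAt {n : ℕ} (x : Fin n → Bool) (i : Fin n) : Fin n → Bool :=
  Function.update x i (!(x i))

/-- `G(f)` has no negative loops. -/
def NoNegLoop {n : ℕ} (f : (Fin n → Bool) → Fin n → Bool) : Prop :=
  ∀ i, ¬ NegArc f i i

/-- First-half components of the embedding construction `f'`. -/
def F1 {n : ℕ} (f : (Fin n → Bool) → Fin n → Bool) (x y : Fin n → Bool) (i : Fin n) : Bool :=
  if y = negc x ∨ flipAt y i = negc x then f x i
  else if wt x + wt y = n then !(x i)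
  else if wt x + wt y = n + 1 then true
  else if wt x + wt y + 1 = n then false
  else if n + 2 ≤ wt x + wt y then true
  else false

/-- The embedding construction `f' : {0,1}^{2n} → {0,1}^{2n}`, with the `2n`
coordinates indexed by `Fin n ⊕ Fin n`. -/
def Fext {n : ℕ} (f : (Fin n → Bool) → Fin n → Bool) (z : (Fin n ⊕ Fin n) → Bool) :
    (Fin n ⊕ Fin n) → Bool :=
  Sum.elim (fun i => F1 f (z ∘ Sum.inl) (z ∘ Sum.inr) i)
           (fun i => !(F1 f (negc (z ∘ Sum.inr)) (negc (z ∘ Sum.inl)) i))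

/-- Concatenation `(x, y) ∈ {0,1}^{2n}`. -/
def pair {n : ℕ} (x y : Fin n → Bool) : (Fin n ⊕ Fin n) → Bool := Sum.elim x y

lemma arc_of_flip {n : ℕ} (f : (Fin n → Bool) → Fin n → Bool) (x : Fin n → Bool)
    (j i : Fin n) (h : f x i ≠ f (Function.update x j (!(x j))) i) : Arc f j i := by
  have h' : f (Function.update x j true) i ≠ f (Function.update x j false) i := by
    cases hb : x j with
    | false =>
      have hv : Function.update x j false = x := by
        rw [← hb]; exact Function.update_eq_self j x
      rw [hb] at h
      simp only [Bool.not_false] at h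
      rw [hv]
      exact h.symm
    | true =>
      have hv : Function.update x j true = x := by
        rw [← hb]; exact Function.update_eq_self j x
      rw [hb] at h
      simp only [Bool.not_true] at h
      rw [hv]
      exact h
  cases ht : f (Function.update x j true) i with
  | false =>
    cases hf : f (Function.update x j false) i with
    | false => exact absurd (ht.trans hf.symm) h'
    | true => exact Or.inr ⟨x, ht, hf⟩
  | true =>
    cases hf : f (Function.update x j false) i with
    | false => exact Or.inl ⟨x, ht, hf⟩
    | true => exact absurd (ht.trans hf.symm) h'

lemma depend {n : ℕ} (f : (Fin n → Bool) → Fin n → Bool) (i : Fin n) :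
    ∀ k (x y : Fin n → Bool),
      (Finset.univ.filter fun j => x j ≠ y j).card = k →
      (∀ j, x j ≠ y j → ¬ Arc f j i) → f x i = f y i := by
  intro k
  induction k with
  | zero =>
    intro x y hc _
    have : ∀ j, x j = y j := by
      intro j
      by_contra hj
      have : j ∈ Finset.univ.filter fun j => x j ≠ y j := by simp [hj]
      rw [Finset.card_eq_zero] at hc
      simp [hc] at this
    exact congrFun (congrArg f (funext this)) i
  | succ k ih =>
    intro x y hc harc
    have hne : (Finset.univ.filter fun j => x j ≠ y j).Nonempty := by
      rw [← Finset.card_pos, hc]; omega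
    obtain ⟨j, hj⟩ := hne
    simp only [Finset.mem_filter] at hj
    have hxj : x j ≠ y j := hj.2
    set x' := Function.update x j (y j) with hx'
    have hxy : y j = !(x j) := by
      cases hb : x j <;> cases hb' : y j <;> simp_all
    have h1 : f x i = f x' i := by
      by_contra h
      exact harc j hxj (arc_of_flip f x j i (by rwa [← hxy]))
    have hfilt : (Finset.univ.filter fun j' => x' j' ≠ y j') =
        (Finset.univ.filter fun j' => x j' ≠ y j') \ {j} := by
      ext j'
      rcases eq_or_ne j' j with rfl | hjj <;>
        simp [hx', Function.update_of_ne, *]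
    have hcard : (Finset.univ.filter fun j' => x' j' ≠ y j').card = k := by
      rw [hfilt, Finset.card_sdiff_of_subset (by simp [hj.2]), hc]
      simp
    have h2 : f x' i = f y i := by
      refine ih x' y hcard ?_
      intro j' hj'
      rcases eq_or_ne j' j with rfl | hjj
      · simp [hx'] at hj'
      · exact harc j' (by simpa [hx', Function.update_of_ne hjj] using hj')
    exact h1.trans h2

theorem stmt_0 {n : ℕ} (f : (Fin n → Bool) → Fin n → Bool)
    (hG : AcyclicIG f) : ∃! y, f y = y := by
  classical
  haveI : IsTrans (Fin n) (Relation.TransGen (Arc f)) := inferInstance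
  haveI : IsIrrefl (Fin n) (Relation.TransGen (Arc f)) := ⟨hG⟩
  have hwf : WellFounded (Relation.TransGen (Arc f)) :=
    Finite.wellFounded_of_trans_of_irrefl _
  set r := Relation.TransGen (Arc f) with hr
  let g : Fin n → Bool := fun i =>
    hwf.fix (fun i IH => f (fun j => if h : r j i then IH j h else false) i) i
  have hg : ∀ i, g i = f (fun j => if h : r j i then g j else false) i := by
    intro i
    exact hwf.fix_eq _ i
  have hfix : f g = g := by
    funext i
    rw [hg i]
    refine depend f i _ g (fun j => if h : r j i then g j else false) rfl ?_
    intro j hj harcj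
    have : r j i := Relation.TransGen.single harcj
    simp [this] at hj
  refine ⟨g, hfix, ?_⟩
  intro y hy
  funext i
  induction i using hwf.induction with
  | _ i IH =>
    have h1 : f y i = f g i := by
      refine depend f i _ y g rfl ?_
      intro j hj harcj
      exact hj (IH j (Relation.TransGen.single harcj))
    calc y i = f y i := (congrFun hy i).symm
      _ = f g i := h1
      _ = g i := congrFun hfix i
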